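/- arXiv:1607.03454 — 9 statements merged into one kernel-verified Lean document; each statement's English description precedes it below -/
import Mathlib

section
/- Suppose μ ∈ ℂ is such that λ := 1/μ satisfies |λ| < ρ, and v = (v_j)_{j≥1} ∈ ℓ₁(ρ) is a nonzero block vector satisfying 𝐀v = μ·v, i.e., the series Σ_{j≥1} N_j·v_j converges with λ·Σ_{j≥1} N_j·v_j = v₁, and λ·(1/j)·v_j = v_{j+1} for all j ≥ 1. Then there exists a vector x ∈ ℂⁿ such that v_j = (λ^{j-1}/(j-1)!)·x for every j ≥ 1. -/
open Matrix

/-- The `j`-th derivative of the matrix-valued function `M` at `0`, taken entrywise. -/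
noncomputable def Mder (n : ℕ) (M : ℂ → Matrix (Fin n) (Fin n) ℂ) (j : ℕ) :
    Matrix (Fin n) (Fin n) ℂ :=
  Matrix.of fun i i' => iteratedDeriv j (fun z => M z i i') 0

/-- `N_j = -(1/j) M(0)⁻¹ M^{(j)}(0)`. -/
noncomputable def Nmat (n : ℕ) (M : ℂ → Matrix (Fin n) (Fin n) ℂ) (j : ℕ) :
    Matrix (Fin n) (Fin n) ℂ :=
  (-(1/(j:ℂ))) • ((M 0)⁻¹ * Mder n M j)

/-- Matrix-vector product on Euclidean space. -/
noncomputable def mvE {n : ℕ} (A : Matrix (Fin n) (Fin n) ℂ)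
    (x : EuclideanSpace ℂ (Fin n)) : EuclideanSpace ℂ (Fin n) :=
  WithLp.toLp 2 (A.mulVec x)

/-- if `(μ, v)` with `v ∈ ℓ₁(ρ)`, `v ≠ 0`, is an eigenpair of `𝐀` and
`λ = 1/μ` satisfies `|λ| < ρ`, then the blocks of `v` satisfy
`v_j = (λ^{j-1}/(j-1)!) x` for some `x ∈ ℂⁿ`.
Blocks are indexed from `0` here: `v j` is the block `v_{j+1}` of the paper. -/
theorem right_eigvec_structure
    (n : ℕ) (hn : 1 ≤ n) (ρ : ℝ) (hρ : 0 < ρ)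
    (M : ℂ → Matrix (Fin n) (Fin n) ℂ)
    (hM : ∀ i i', AnalyticOnNhd ℂ (fun z => M z i i') (Metric.closedBall (0:ℂ) ρ))
    (hM0 : IsUnit (M 0))
    (μ lam : ℂ) (hlam : lam = 1/μ) (hlamρ : ‖lam‖ < ρ)
    (v : ℕ → EuclideanSpace ℂ (Fin n)) (hvne : v ≠ 0)
    (hvl1 : Summable fun j : ℕ => ρ^(j+1) / (Nat.factorial (j+1)) * ‖v j‖)
    (hfirst : ∃ s : EuclideanSpace ℂ (Fin n),
      HasSum (fun j : ℕ => mvE (Nmat n M (j+1)) (v j)) s ∧ lam • s = v 0)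
    (hrec : ∀ j : ℕ, lam • ((1/((j:ℂ)+1)) • v j) = v (j+1)) :
    ∃ x : EuclideanSpace ℂ (Fin n),
      ∀ j : ℕ, v j = (lam^j / (Nat.factorial j : ℂ)) • x := by
  refine ⟨v 0, fun j => ?_⟩
  induction j with
  | zero => simp
  | succ j ih =>
    rw [← hrec j, ih, smul_smul, smul_smul]
    congr 1
    have h1 : ((j:ℂ)+1) ≠ 0 := Nat.cast_add_one_ne_zero j
    have h2 : (Nat.factorial j : ℂ) ≠ 0 := by exact_mod_cast Nat.cast_ne_zero.mpr j.factorial_ne_zero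
    field_simp [Nat.factorial_succ, pow_succ]
    rw [Nat.factorial_succ]
    push_cast
    ring
end

section
/- Let λ ∈ ℂ with 0 < |λ| < ρ and let x ∈ ℂⁿ be nonzero. Define the block vector v by v_j := (λ^{j-1}/(j-1)!)·x for j ≥ 1. Then M(λ)·x = 0 if and only if v ∈ ℓ₁(ρ), the series Σ_{j≥1} N_j·v_j converges with λ·Σ_{j≥1} N_j·v_j = v₁, and λ·(1/j)·v_j = v_{j+1} for all j ≥ 1 (i.e., if and only if (1/λ, v) is an eigenpair of 𝐀). -/
open Matrix

/-- with `0 < |λ| < ρ`, `x ≠ 0`, and `v_j = (λ^{j-1}/(j-1)!) x`,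
`(λ, x)` solves `M(λ)x = 0` if and only if `(1/λ, v)` is an eigenpair of `𝐀`
(with `v ∈ ℓ₁(ρ)`).  Blocks are indexed from `0`: `v j` is the paper's `v_{j+1}`. -/
theorem right_eigvec_equivalence
    (n : ℕ) (hn : 1 ≤ n) (ρ : ℝ) (hρ : 0 < ρ)
    (M : ℂ → Matrix (Fin n) (Fin n) ℂ)
    (hM : ∀ i i', AnalyticOnNhd ℂ (fun z => M z i i') (Metric.closedBall (0:ℂ) ρ))
    (hM0 : IsUnit (M 0))
    (lam : ℂ) (hlam0 : lam ≠ 0) (hlamρ : ‖lam‖ < ρ)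
    (x : EuclideanSpace ℂ (Fin n)) (hx : x ≠ 0)
    (v : ℕ → EuclideanSpace ℂ (Fin n))
    (hv : ∀ j : ℕ, v j = (lam^j / (Nat.factorial j : ℂ)) • x) :
    mvE (M lam) x = 0 ↔
      ((Summable fun j : ℕ => ρ^(j+1) / (Nat.factorial (j+1)) * ‖v j‖) ∧
       (∃ s : EuclideanSpace ℂ (Fin n),
         HasSum (fun j : ℕ => mvE (Nmat n M (j+1)) (v j)) s ∧ lam • s = v 0) ∧
       (∀ j : ℕ, lam • ((1/((j:ℂ)+1)) • v j) = v (j+1))) := by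
  have hdet : IsUnit (M 0).det := (Matrix.isUnit_iff_isUnit_det _).mp hM0
  have hinv : (M 0)⁻¹ * M 0 = 1 := Matrix.nonsing_inv_mul _ hdet
  have hinv' : M 0 * (M 0)⁻¹ = 1 := Matrix.mul_nonsing_inv _ hdet
  -- conjunct 1 always holds
  have hsummable : Summable fun j : ℕ => ρ^(j+1) / (Nat.factorial (j+1)) * ‖v j‖ := by
    have hbound : ∀ j : ℕ, ρ^(j+1) / (Nat.factorial (j+1)) * ‖v j‖ ≤
        ρ * ‖x‖ * ((ρ * ‖lam‖)^j / (Nat.factorial j)) := by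
      intro j
      have hnv : ‖v j‖ = (‖lam‖)^j / (Nat.factorial j) * ‖x‖ := by
        rw [hv j, norm_smul]
        simp [map_div₀, map_pow, Complex.norm_natCast]
      rw [hnv]
      have h1 : (0:ℝ) < Nat.factorial j := by positivity
      have h2 : (0:ℝ) < Nat.factorial (j+1) := by positivity
      have hfle : (Nat.factorial j : ℝ) ≤ Nat.factorial (j+1) := by
        exact_mod_cast Nat.factorial_le (Nat.le_succ j)
      have h3 : ρ^(j+1) / (Nat.factorial (j+1)) ≤ ρ^(j+1) / Nat.factorial j :=
        div_le_div_of_nonneg_left (by positivity) h1 hfle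
      calc ρ^(j+1) / (Nat.factorial (j+1)) * ((‖lam‖)^j / (Nat.factorial j) * ‖x‖)
          ≤ ρ^(j+1) / (Nat.factorial j) * ((‖lam‖)^j / (Nat.factorial j) * ‖x‖) := by
            apply mul_le_mul_of_nonneg_right h3; positivity
        _ ≤ ρ * ‖x‖ * ((ρ * ‖lam‖)^j / (Nat.factorial j)) := by
            rw [pow_succ, mul_pow]
            have hfge : (1:ℝ) ≤ Nat.factorial j := by exact_mod_cast Nat.one_le_iff_ne_zero.mpr j.factorial_ne_zero
            have : (‖lam‖)^j / (Nat.factorial j) ≤ (‖lam‖)^j := by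
              exact div_le_self (by positivity) hfge
            calc ρ ^ j * ρ / ↑(Nat.factorial j) * ((‖lam‖)^j / ↑(Nat.factorial j) * ‖x‖)
                ≤ ρ ^ j * ρ / ↑(Nat.factorial j) * ((‖lam‖)^j * ‖x‖) := by
                  apply mul_le_mul_of_nonneg_left _ (by positivity)
                  exact mul_le_mul_of_nonneg_right this (norm_nonneg _)
              _ = ρ * ‖x‖ * (ρ ^ j * (‖lam‖) ^ j / ↑(Nat.factorial j)) := by ring
    refine Summable.of_nonneg_of_le (fun j => by positivity) hbound ?_
    exact ((Real.summable_pow_div_factorial (ρ * ‖lam‖)).mul_left (ρ * ‖x‖))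
  -- conjunct 3 always holds
  have hshift : ∀ j : ℕ, lam • ((1/((j:ℂ)+1)) • v j) = v (j+1) := by
    intro j
    rw [hv j, hv (j+1), smul_smul, smul_smul]
    congr 1
    have hj1 : ((j:ℂ)+1) ≠ 0 := Nat.cast_add_one_ne_zero j
    have hf : ((Nat.factorial j : ℂ)) ≠ 0 := Nat.cast_ne_zero.mpr j.factorial_ne_zero
    rw [Nat.factorial_succ]
    push_cast
    field_simp
    ring
  -- convergence of the matrix Taylor series
  have hMat : HasSum (fun j : ℕ => (lam^(j+1) / ((Nat.factorial (j+1) : ℂ))) • Mder n M (j+1))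
      (M lam - M 0) := by
    refine Pi.hasSum.mpr ?_
    intro i
    rw [Pi.hasSum]
    intro i'
    have hdf : DifferentiableOn ℂ (fun z => M z i i') (Metric.ball (0:ℂ) ρ) :=
      ((hM i i').differentiableOn).mono Metric.ball_subset_closedBall
    have hz : lam ∈ Metric.ball (0:ℂ) ρ := by
      simpa [Metric.mem_ball, Complex.dist_eq] using hlamρ
    have H := Complex.hasSum_taylorSeries_on_ball hdf hz
    simp only [sub_zero] at H
    have H' := (hasSum_nat_add_iff' (f := fun m : ℕ =>
        ((Nat.factorial m : ℂ))⁻¹ • lam ^ m • iteratedDeriv m (fun z => M z i i') 0) 1).mpr H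
    simp only [Finset.range_one, Finset.sum_singleton, Nat.factorial_zero, Nat.cast_one,
      inv_one, pow_zero, one_smul, iteratedDeriv_zero] at H'
    have hfun : (fun j : ℕ => ((lam^(j+1) / ((Nat.factorial (j+1) : ℂ))) • Mder n M (j+1)) i i')
        = fun j : ℕ => ((Nat.factorial (j+1) : ℂ))⁻¹ • lam ^ (j+1) •
            iteratedDeriv (j+1) (fun z => M z i i') 0 := by
      funext j
      simp only [Matrix.smul_apply, Mder, Matrix.of_apply, smul_eq_mul]
      ring
    have hval : ((M lam - M 0) : Matrix (Fin n) (Fin n) ℂ) i i' = M lam i i' - M 0 i i' := rfl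
    rw [hval, hfun]
    exact H'
  -- the continuous linear map A ↦ -(1/λ) • M(0)⁻¹ (A x)
  let Tl : Matrix (Fin n) (Fin n) ℂ →ₗ[ℂ] EuclideanSpace ℂ (Fin n) :=
    { toFun := fun A => WithLp.toLp 2 ((-(1/lam)) • ((M 0)⁻¹.mulVec (A.mulVec x)))
      map_add' := fun A B => by
        simp only [Matrix.add_mulVec, Matrix.mulVec_add, smul_add, WithLp.toLp_add]
      map_smul' := fun c A => by
        simp only [Matrix.smul_mulVec, Matrix.mulVec_smul, RingHom.id_apply]
        rw [← WithLp.toLp_smul]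
        exact congrArg _ (smul_comm _ _ _) }
  have hTc : Continuous Tl := Tl.continuous_of_finiteDimensional
  have hs0 : HasSum (fun j : ℕ => Tl ((lam^(j+1) / ((Nat.factorial (j+1) : ℂ))) • Mder n M (j+1)))
      (Tl (M lam - M 0)) := hMat.map Tl.toAddMonoidHom hTc
  have hsm : ∀ (A : Matrix (Fin n) (Fin n) ℂ) (c : ℂ),
      A.mulVec (c • x) = c • A.mulVec x := by
    intro A c
    funext i
    simp [Matrix.mulVec, dotProduct, Finset.mul_sum, PiLp.smul_apply, smul_eq_mul,
      mul_left_comm]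
  have hterm : (fun j : ℕ => Tl ((lam^(j+1) / ((Nat.factorial (j+1) : ℂ))) • Mder n M (j+1)))
      = fun j : ℕ => mvE (Nmat n M (j+1)) (v j) := by
    funext j
    show WithLp.toLp 2 ((-(1/lam)) • ((M 0)⁻¹.mulVec (((lam^(j+1) / ((Nat.factorial (j+1) : ℂ))) •
        Mder n M (j+1)).mulVec x))) = _
    rw [hv j, mvE, Nmat, WithLp.ofLp_smul, hsm, Matrix.smul_mulVec, Matrix.smul_mulVec,
      Matrix.mulVec_smul, ← Matrix.mulVec_mulVec, smul_smul, smul_smul]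
    congr 2
    have hj1 : ((j:ℂ)+1) ≠ 0 := Nat.cast_add_one_ne_zero j
    have hf : ((Nat.factorial j : ℂ)) ≠ 0 := Nat.cast_ne_zero.mpr j.factorial_ne_zero
    rw [Nat.factorial_succ, pow_succ]
    push_cast
    field_simp
  rw [hterm] at hs0
  have hv0 : v 0 = x := by rw [hv 0]; simp
  set w : EuclideanSpace ℂ (Fin n) := WithLp.toLp 2 ((M 0)⁻¹.mulVec ((M lam).mulVec x)) with hwdef
  have hTval : Tl (M lam - M 0) = (-(1/lam)) • (w - x) := by
    show WithLp.toLp 2 ((-(1/lam)) • ((M 0)⁻¹.mulVec (((M lam) - (M 0)).mulVec x))) = _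
    rw [hwdef, Matrix.sub_mulVec, Matrix.mulVec_sub]
    simp only [Matrix.mulVec_mulVec, hinv, Matrix.one_mulVec, WithLp.toLp_smul, WithLp.toLp_sub,
      WithLp.toLp_ofLp]
  constructor
  · intro h0
    refine ⟨hsummable, ⟨Tl (M lam - M 0), hs0, ?_⟩, hshift⟩
    have hMx : (M lam).mulVec x = 0 := congrArg WithLp.ofLp h0
    have hw0 : w = 0 := by rw [hwdef, hMx, Matrix.mulVec_zero, WithLp.toLp_zero]
    rw [hTval, hw0, zero_sub, hv0, smul_smul]
    rw [show lam * -(1/lam) = -1 by field_simp]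
    simp
  · rintro ⟨-, ⟨s, hsum, hls⟩, -⟩
    have hse : s = Tl (M lam - M 0) := hsum.unique hs0
    rw [hse, hTval, hv0, smul_smul, show lam * -(1/lam) = -1 by field_simp] at hls
    have h2 : -(w - x) = x := by simpa [neg_smul, one_smul] using hls
    have h3 : w - x = -x := by
      have := congrArg Neg.neg h2
      simpa using this
    have hw0 : w = 0 := by
      calc w = (w - x) + x := by abel
        _ = -x + x := by rw [h3]
        _ = 0 := by abel
    suffices (M lam).mulVec x = 0 by rw [mvE, this, WithLp.toLp_zero]
    have hw0' : (M 0)⁻¹.mulVec ((M lam).mulVec x) = (0 : Fin n → ℂ) := congrArg WithLp.ofLp hw0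
    have := congrArg (fun u : Fin n → ℂ => (M 0).mulVec u) hw0'
    simpa [Matrix.mulVec_mulVec, ← Matrix.mul_assoc, hinv', Matrix.one_mulVec,
      Matrix.mulVec_zero] using this
end

section
/- Suppose μ ∈ ℂ is such that λ := 1/μ satisfies |λ| < ρ, and w = (w_k)_{k≥1} ∈ ℓ₁(ρ) is a nonzero block vector satisfying λ·𝐀*w = w, i.e., λ·(N_k^*·w₁ + (1/k)·w_{k+1}) = w_k for all k ≥ 1. Then there exists a vector z ∈ ℂⁿ such that for every k ≥ 1 the series Σ_{j=1}^∞ ((k-1)!/(j+k-2)!)·λ^j·N_{j+k-1}^*·z converges and equals w_k. -/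
open Matrix

/-- if `(μ, w)` with `w ∈ ℓ₁(ρ)`, `w ≠ 0`, satisfies `λ 𝐀* w = w`
where `λ = 1/μ`, `|λ| < ρ`, then there is `z ∈ ℂⁿ` such that for every `k ≥ 1`
the series `Σ_{j≥1} ((k-1)!/(j+k-2)!) λ^j N_{j+k-1}^* z` converges to `w_k`.
Blocks are indexed from `0`: `w k` is the paper's `w_{k+1}`, and the
inner series index `j` of the paper corresponds to `j+1` below. -/
theorem left_eigvec_structure
    (n : ℕ) (hn : 1 ≤ n) (ρ : ℝ) (hρ : 0 < ρ)
    (M : ℂ → Matrix (Fin n) (Fin n) ℂ)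
    (hM : ∀ i i', AnalyticOnNhd ℂ (fun z => M z i i') (Metric.closedBall (0:ℂ) ρ))
    (hM0 : IsUnit (M 0))
    (μ lam : ℂ) (hlam : lam = 1/μ) (hlamρ : ‖lam‖ < ρ)
    (w : ℕ → EuclideanSpace ℂ (Fin n)) (hwne : w ≠ 0)
    (hwl1 : Summable fun k : ℕ => ρ^(k+1) / (Nat.factorial (k+1)) * ‖w k‖)
    (heig : ∀ k : ℕ,
      lam • (mvE ((Nmat n M (k+1))ᴴ) (w 0) + (1/((k:ℂ)+1)) • w (k+1)) = w k) :
    ∃ z : EuclideanSpace ℂ (Fin n), ∀ k : ℕ,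
      HasSum (fun j : ℕ =>
        ((Nat.factorial k : ℂ) / (Nat.factorial (j + k)) * lam^(j+1)) •
          mvE ((Nmat n M (j + k + 1))ᴴ) z) (w k) := by
  classical
  have hlam0 : lam ≠ 0 := by
    intro h
    apply hwne
    funext k
    have := heig k
    simpa [h] using this.symm
  -- the recurrence, rearranged
  have key : ∀ m : ℕ, mvE ((Nmat n M (m+1))ᴴ) (w 0)
      = lam⁻¹ • w m - (1/((m:ℂ)+1)) • w (m+1) := by
    intro m
    have h2 : mvE ((Nmat n M (m+1))ᴴ) (w 0) + (1/((m:ℂ)+1)) • w (m+1)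
        = lam⁻¹ • w m := by
      calc mvE ((Nmat n M (m+1))ᴴ) (w 0) + (1/((m:ℂ)+1)) • w (m+1)
          = lam⁻¹ • (lam • (mvE ((Nmat n M (m+1))ᴴ) (w 0)
              + (1/((m:ℂ)+1)) • w (m+1))) := (inv_smul_smul₀ hlam0 _).symm
        _ = lam⁻¹ • w m := by rw [heig m]
    exact eq_sub_of_add_eq h2
  -- a global bound on `‖w m‖`
  set C : ℝ := ∑' i : ℕ, ρ^(i+1) / (Nat.factorial (i+1)) * ‖w i‖ with hCdef
  have hC0 : 0 ≤ C := tsum_nonneg fun i => by positivity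
  have hCb : ∀ m : ℕ, ‖w m‖ ≤ C * (Nat.factorial (m+1)) / ρ^(m+1) := by
    intro m
    have h1 : ρ^(m+1) / (Nat.factorial (m+1)) * ‖w m‖ ≤ C :=
      Summable.le_tsum hwl1 m fun i _ => by positivity
    have hfac : (0:ℝ) < (Nat.factorial (m+1) : ℝ) := by
      exact_mod_cast Nat.factorial_pos (m+1)
    have hρp : (0:ℝ) < ρ^(m+1) := pow_pos hρ (m+1)
    rw [div_mul_eq_mul_div, div_le_iff₀ hfac] at h1
    rw [le_div_iff₀ hρp, mul_comm]
    exact h1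
  refine ⟨w 0, fun k => ?_⟩
  -- the telescoping sequence
  set b : ℕ → EuclideanSpace ℂ (Fin n) :=
    fun j => ((Nat.factorial k : ℂ)/(Nat.factorial (j+k)) * lam^j) • w (j+k) with hbdef
  have hfacC : ∀ m : ℕ, ((Nat.factorial m : ℂ)) ≠ 0 := fun m => by
    exact_mod_cast (Nat.factorial_pos m).ne'
  have hterm : ∀ j : ℕ, ((Nat.factorial k : ℂ) / (Nat.factorial (j + k)) * lam^(j+1)) •
          mvE ((Nmat n M (j + k + 1))ᴴ) (w 0) = b j - b (j+1) := by
    intro j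
    have e1 : (Nat.factorial k : ℂ) / (Nat.factorial (j + k)) * lam^(j+1) * lam⁻¹
        = (Nat.factorial k : ℂ)/(Nat.factorial (j+k)) * lam^j := by
      rw [mul_assoc, pow_succ, mul_assoc, mul_inv_cancel₀ hlam0, mul_one]
    have e2 : (Nat.factorial k : ℂ) / (Nat.factorial (j + k)) * lam^(j+1) *
          (1/((((j+k):ℕ):ℂ)+1))
        = (Nat.factorial k : ℂ)/(Nat.factorial (j+k+1)) * lam^(j+1) := by
      rw [Nat.factorial_succ]
      have h1 : ((((j+k):ℕ):ℂ)+1) ≠ 0 := Nat.cast_add_one_ne_zero _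
      have h2 := hfacC (j+k)
      push_cast
      field_simp
    have hb1 : b (j+1) = ((Nat.factorial k : ℂ)/(Nat.factorial (j+k+1)) * lam^(j+1))
        • w (j+k+1) := by
      have hidx : j+1+k = j+k+1 := by omega
      simp only [hbdef, hidx]
    rw [key (j+k), smul_sub, smul_smul, smul_smul, e1, e2, hb1]
  -- summability of `b`
  set q : ℝ := ‖lam‖ / ρ with hqdef
  have hq0 : 0 ≤ q := div_nonneg (norm_nonneg _) hρ.le
  have hq1 : q < 1 := by
    rw [hqdef, div_lt_one hρ]
    simpa using hlamρ
  have hbnorm : ∀ j : ℕ, ‖b j‖ ≤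
      (C * (Nat.factorial k) / ρ^(k+1)) * ((j:ℝ)+k+1) * q^j := by
    intro j
    have hnc : ‖((Nat.factorial k : ℂ)/(Nat.factorial (j+k)) * lam^j)‖
        = (Nat.factorial k : ℝ)/(Nat.factorial (j+k)) * ‖lam‖^j := by
      simp [norm_mul, norm_div, norm_pow]
    have h1 : ‖b j‖ ≤ (Nat.factorial k : ℝ)/(Nat.factorial (j+k)) * ‖lam‖^j *
        (C * (Nat.factorial (j+k+1)) / ρ^(j+k+1)) := by
      simp only [hbdef]
      rw [norm_smul, hnc]
      have := hCb (j+k)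
      have hpos : 0 ≤ (Nat.factorial k : ℝ)/(Nat.factorial (j+k)) * ‖lam‖^j := by
        positivity
      exact mul_le_mul_of_nonneg_left this hpos
    refine h1.trans (le_of_eq ?_)
    have hffac : ((j+k+1).factorial : ℝ) = ((j:ℝ)+k+1) * ((j+k).factorial : ℝ) := by
      rw [Nat.factorial_succ]; push_cast; ring
    have hrpow : ρ^(j+k+1) = ρ^j * ρ^(k+1) := by
      have h : j+k+1 = j+(k+1) := by omega
      rw [h, pow_add]
    have hfne : ((j+k).factorial : ℝ) ≠ 0 := by
      exact_mod_cast (Nat.factorial_pos (j+k)).ne'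
    rw [hffac, hrpow, hqdef, div_pow]
    field_simp
  have hgeom : Summable (fun j : ℕ =>
      (C * (Nat.factorial k) / ρ^(k+1)) * ((j:ℝ)+k+1) * q^j) := by
    have h1 : Summable (fun j : ℕ => (j:ℝ)^1 * q^j) :=
      summable_pow_mul_geometric_of_norm_lt_one 1 (by rwa [Real.norm_eq_abs, abs_of_nonneg hq0])
    have h2 : Summable (fun j : ℕ => q^j) := summable_geometric_of_lt_one hq0 hq1
    have h3 : Summable (fun j : ℕ => ((j:ℝ)+k+1) * q^j) := by
      have := (h1.add (h2.mul_left ((k:ℝ)+1)))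
      refine this.congr fun j => ?_
      ring
    simpa [mul_assoc] using h3.mul_left (C * (Nat.factorial k) / ρ^(k+1))
  have hbsum : Summable b := by
    refine Summable.of_norm_bounded hgeom hbnorm
  have hbzero : Filter.Tendsto b Filter.atTop (nhds 0) := hbsum.tendsto_atTop_zero
  have hbsum' : Summable (fun j => b (j+1)) := (summable_nat_add_iff 1).2 hbsum
  have hsub : Summable (fun j => b j - b (j+1)) := hbsum.sub hbsum'
  have hb0 : b 0 = w k := by
    simp [hbdef, div_self (hfacC k)]
  have hten : Filter.Tendsto (fun m => ∑ j ∈ Finset.range m, (b j - b (j+1)))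
      Filter.atTop (nhds (w k)) := by
    have he : (fun m => ∑ j ∈ Finset.range m, (b j - b (j+1)))
        = fun m => b 0 - b m := funext fun m => Finset.sum_range_sub' b m
    rw [he]
    have := (tendsto_const_nhds (x := b 0)).sub hbzero
    simpa [hb0] using this
  have htsum : (∑' j, (b j - b (j+1))) = w k :=
    tendsto_nhds_unique hsub.hasSum.tendsto_sum_nat hten
  have final : HasSum (fun j => b j - b (j+1)) (w k) := htsum ▸ hsub.hasSum
  exact final.congr_fun fun j => hterm j
end

section
/- Let x₁ ∈ ℂⁿ and let 𝐱 be the block vector whose first block is x₁ and all other blocks are zero. Fix an integer k ≥ 1 and define z₀ := (1/k!)·x₁ and, recursively, z_i := Σ_{ℓ=1}^{i} ((k-i+ℓ)!/((ℓ-1)!·(k-i)!))·N_ℓ·z_{i-ℓ} for i = 1, …, k. Then 𝐀^k 𝐱 is the block vector whose j-th block equals z_{k-j+1} for 1 ≤ j ≤ k+1 and is zero for j > k+1. -/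
open Matrix

/-- The operator `𝐀` acting on block vectors (blocks indexed from `0`, so the
`0`-th block is the paper's first block): `(𝐀w)₁ = Σ_{j≥1} N_j w_j` (a `tsum`,
which is a finite sum for finitely supported `w`) and `(𝐀w)_{j+1} = (1/j) w_j`. -/
noncomputable def Aop (n : ℕ) (M : ℂ → Matrix (Fin n) (Fin n) ℂ)
    (w : ℕ → EuclideanSpace ℂ (Fin n)) : ℕ → EuclideanSpace ℂ (Fin n)
  | 0 => ∑' j : ℕ, mvE (Nmat n M (j+1)) (w j)
  | (j+1) => (1/((j:ℂ)+1)) • w j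


lemma mvE_zero {n : ℕ} (A : Matrix (Fin n) (Fin n) ℂ) : mvE A 0 = 0 := by
  ext i
  simp [mvE, Matrix.mulVec, dotProduct]

lemma mvE_smul {n : ℕ} (A : Matrix (Fin n) (Fin n) ℂ) (c : ℂ)
    (x : EuclideanSpace ℂ (Fin n)) : mvE A (c • x) = c • mvE A x := by
  ext i
  simp [mvE, Matrix.mulVec, dotProduct, Finset.mul_sum, mul_comm, mul_left_comm]

lemma Aop_zero (n : ℕ) (M : ℂ → Matrix (Fin n) (Fin n) ℂ)
    (w : ℕ → EuclideanSpace ℂ (Fin n)) :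
    Aop n M w 0 = ∑' j : ℕ, mvE (Nmat n M (j+1)) (w j) := rfl

lemma Aop_succ (n : ℕ) (M : ℂ → Matrix (Fin n) (Fin n) ℂ)
    (w : ℕ → EuclideanSpace ℂ (Fin n)) (j : ℕ) :
    Aop n M w (j+1) = (1/((j:ℂ)+1)) • w j := rfl

/-- the structure of `𝐀^k 𝐱` for `𝐱 = e₁ ⊗ x₁`.
Blocks are indexed from `0`: the paper's `j`-th block (`1 ≤ j ≤ k+1`) is the
block of index `j-1` below, so block `j` equals `z_{k-j}` for `j ≤ k`. -/
theorem Ak_action_on_e1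
    (n : ℕ) (hn : 1 ≤ n) (ρ : ℝ) (hρ : 0 < ρ)
    (M : ℂ → Matrix (Fin n) (Fin n) ℂ)
    (hM : ∀ i i', AnalyticOnNhd ℂ (fun z => M z i i') (Metric.closedBall (0:ℂ) ρ))
    (hM0 : IsUnit (M 0))
    (x₁ : EuclideanSpace ℂ (Fin n))
    (bx : ℕ → EuclideanSpace ℂ (Fin n))
    (hbx : ∀ j : ℕ, bx j = if j = 0 then x₁ else 0)
    (k : ℕ) (hk : 1 ≤ k)
    (z : ℕ → EuclideanSpace ℂ (Fin n))
    (hz0 : z 0 = (1/(Nat.factorial k : ℂ)) • x₁)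
    (hzi : ∀ i : ℕ, 1 ≤ i → i ≤ k →
      z i = ∑ ℓ ∈ Finset.Icc 1 i,
        ((Nat.factorial (k - i + ℓ) : ℂ) /
          ((Nat.factorial (ℓ - 1) : ℂ) * (Nat.factorial (k - i) : ℂ))) •
          mvE (Nmat n M ℓ) (z (i - ℓ))) :
    ∀ j : ℕ, (Aop n M)^[k] bx j = if j ≤ k then z (k - j) else 0 := by
  have key : ∀ m, m ≤ k → ∀ j : ℕ, (Aop n M)^[m] bx j =
      if j ≤ m then (((k - m + j).factorial : ℂ)/((j.factorial : ℂ))) • z (m - j) else 0 := by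
    intro m
    induction m with
    | zero =>
      intro _ j
      rcases j with _ | j
      · have hne : ((k.factorial : ℂ)) ≠ 0 := by exact_mod_cast Nat.factorial_ne_zero k
        simp [hbx, hz0, smul_smul, mul_one_div, div_self hne, mul_inv_cancel₀ hne]
      · simp [hbx]
    | succ m ih =>
      intro hm j
      have ih' := ih (le_trans (Nat.le_succ m) hm)
      rw [Function.iterate_succ_apply']
      rcases j with _ | j
      · rw [Aop_zero]
        rw [tsum_eq_sum (s := Finset.range (m+1)) (by
          intro b hb
          rw [ih' b, if_neg (by simp at hb; omega), mvE_zero])]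
        have h1 : (1:ℕ) ≤ m + 1 := by omega
        simp only [Nat.zero_le, if_pos, Nat.sub_zero, Nat.factorial_zero, Nat.cast_one, div_one]
        rw [hzi (m+1) h1 hm, Finset.smul_sum, ← Finset.Ico_add_one_right_eq_Icc, Finset.sum_Ico_eq_sum_range]
        simp only [Nat.add_sub_cancel]
        refine Finset.sum_congr rfl fun j hj => ?_
        simp only [Finset.mem_range] at hj
        rw [ih' j, if_pos (by omega), mvE_smul, smul_smul]
        have e0 : k - (m+1) + 0 = k - (m+1) := by omega
        have e1 : 1 + j = j + 1 := by omega
        have e2 : (j + 1) - 1 = j := by omega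
        have e3 : (m + 1) - (j + 1) = m - j := by omega
        have e4 : k - (m+1) + (j + 1) = k - m + j := by omega
        rw [e0, e1, e2, e3, e4]
        congr 1
        have hne : ((k - (m+1)).factorial : ℂ) ≠ 0 := by
          exact_mod_cast (Nat.factorial_ne_zero _)
        have hje : ((j.factorial : ℂ)) ≠ 0 := by
          exact_mod_cast (Nat.factorial_ne_zero _)
        field_simp
      · rw [Aop_succ, ih' j]
        by_cases hjm : j ≤ m
        · rw [if_pos hjm, if_pos (by omega), smul_smul]
          have e3 : (m + 1) - (j + 1) = m - j := by omega
          have e4 : k - (m+1) + (j+1) = k - m + j := by omega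
          rw [e3, e4]
          congr 1
          rw [Nat.factorial_succ]
          push_cast
          have h1 : ((j:ℂ) + 1) ≠ 0 := Nat.cast_add_one_ne_zero j
          have hje : ((j.factorial : ℂ)) ≠ 0 := by
            exact_mod_cast (Nat.factorial_ne_zero _)
          field_simp
          try ring
        · rw [if_neg hjm, if_neg (by omega), smul_zero]
  intro j
  have h := key k le_rfl j
  rcases le_or_gt j k with hjk | hjk
  · rw [h, if_pos hjk, if_pos hjk]
    have : k - k + j = j := by omega
    rw [this, div_self (by exact_mod_cast (Nat.factorial_ne_zero j)), one_smul]
  · rw [h, if_neg (by omega), if_neg (by omega)]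
end

section
/- Let ỹ₁ ∈ ℂⁿ and let 𝐲̃ be the block vector whose m-th block is N_m^*·ỹ₁ for every m ≥ 1. Fix an integer k ≥ 1 and define z̃₀ := ỹ₁ and, recursively, z̃_i := Σ_{ℓ=1}^{i} (1/(ℓ-1)!)·N_ℓ^*·z̃_{i-ℓ} for i = 1, …, k. Then (𝐀*)^k 𝐲̃ is the block vector whose m-th block equals Σ_{j=1}^{k+1} ((m-1)!/(j+m-2)!)·N_{j+m-1}^*·z̃_{k-j+1} for every m ≥ 1. -/
open Matrix

/-- The adjoint operator `𝐀*` acting on block vectors (blocks indexed from `0`,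
so the block of index `j` is the paper's block `j+1`):
`(𝐀*w)_j = N_j^* w₁ + (1/j) w_{j+1}` for `j ≥ 1`. -/
noncomputable def Astar (n : ℕ) (M : ℂ → Matrix (Fin n) (Fin n) ℂ)
    (w : ℕ → EuclideanSpace ℂ (Fin n)) : ℕ → EuclideanSpace ℂ (Fin n) :=
  fun j => mvE ((Nmat n M (j+1))ᴴ) (w 0) + (1/((j:ℂ)+1)) • w (j+1)

lemma mvE_add {n : ℕ} (A : Matrix (Fin n) (Fin n) ℂ)
    (x y : EuclideanSpace ℂ (Fin n)) : mvE A (x + y) = mvE A x + mvE A y := by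
  show WithLp.toLp 2 (A.mulVec (WithLp.ofLp x + WithLp.ofLp y)) = WithLp.toLp 2 (A.mulVec (WithLp.ofLp x) + A.mulVec (WithLp.ofLp y))
  exact congrArg (WithLp.toLp 2) (A.mulVec_add _ _)

lemma mvE_sum {n : ℕ} {ι : Type*} (A : Matrix (Fin n) (Fin n) ℂ) (s : Finset ι)
    (f : ι → EuclideanSpace ℂ (Fin n)) :
    mvE A (∑ i ∈ s, f i) = ∑ i ∈ s, mvE A (f i) := by
  classical
  induction s using Finset.cons_induction with
  | empty =>
      show WithLp.toLp 2 (A.mulVec 0) = WithLp.toLp 2 0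
      exact congrArg (WithLp.toLp 2) (Matrix.mulVec_zero A)
  | cons a s ha ih =>
      rw [Finset.sum_cons, Finset.sum_cons, mvE_add, ih]

/-- the structure of `(𝐀*)^k 𝐲̃` for `𝐲̃ = 𝐍^* ỹ₁`.
Blocks are indexed from `0` (block `m` below is the paper's block `m+1`), and
the sum index `j` below corresponds to the paper's `j+1 ∈ {1,…,k+1}`. -/
theorem Astark_action
    (n : ℕ) (hn : 1 ≤ n) (ρ : ℝ) (hρ : 0 < ρ)
    (M : ℂ → Matrix (Fin n) (Fin n) ℂ)
    (hM : ∀ i i', AnalyticOnNhd ℂ (fun z => M z i i') (Metric.closedBall (0:ℂ) ρ))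
    (hM0 : IsUnit (M 0))
    (y₁ : EuclideanSpace ℂ (Fin n))
    (by' : ℕ → EuclideanSpace ℂ (Fin n))
    (hby : ∀ m : ℕ, by' m = mvE ((Nmat n M (m+1))ᴴ) y₁)
    (k : ℕ) (hk : 1 ≤ k)
    (zt : ℕ → EuclideanSpace ℂ (Fin n))
    (hzt0 : zt 0 = y₁)
    (hzti : ∀ i : ℕ, 1 ≤ i → i ≤ k →
      zt i = ∑ ℓ ∈ Finset.Icc 1 i,
        (1/(Nat.factorial (ℓ - 1) : ℂ)) • mvE ((Nmat n M ℓ)ᴴ) (zt (i - ℓ))) :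
    ∀ m : ℕ, (Astar n M)^[k] by' m =
      ∑ j ∈ Finset.range (k+1),
        ((Nat.factorial m : ℂ) / (Nat.factorial (j + m) : ℂ)) •
          mvE ((Nmat n M (j + m + 1))ᴴ) (zt (k - j)) := by
  have hfact : ∀ p : ℕ, (Nat.factorial p : ℂ) ≠ 0 := fun p =>
    Nat.cast_ne_zero.mpr (Nat.factorial_ne_zero p)
  -- `zt i` in `range` form
  have hztr : ∀ i : ℕ, 1 ≤ i → i ≤ k →
      zt i = ∑ j ∈ Finset.range i,
        (1/(Nat.factorial j : ℂ)) • mvE ((Nmat n M (j+1))ᴴ) (zt (i - 1 - j)) := by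
    intro i hi1 hik
    rw [hzti i hi1 hik, ← Finset.Ico_add_one_right_eq_Icc, Finset.sum_Ico_eq_sum_range]
    refine Finset.sum_congr (by norm_num) ?_
    intro j hj
    rw [show 1 + j - 1 = j from by omega, show 1 + j = j + 1 from by omega,
      show i - (j+1) = i - 1 - j from by omega]
  suffices H : ∀ K : ℕ, 1 ≤ K → K ≤ k → ∀ m : ℕ,
      (Astar n M)^[K] by' m =
      ∑ j ∈ Finset.range (K+1),
        ((Nat.factorial m : ℂ) / (Nat.factorial (j + m) : ℂ)) •
          mvE ((Nmat n M (j + m + 1))ᴴ) (zt (K - j)) by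
    exact H k hk le_rfl
  intro K hK1
  induction K, hK1 using Nat.le_induction with
  | base =>
      intro _ m
      have hz1 : zt 1 = mvE ((Nmat n M 1)ᴴ) y₁ := by
        rw [hztr 1 le_rfl hk]
        simp [hzt0]
      rw [Function.iterate_one]
      show mvE ((Nmat n M (m+1))ᴴ) (by' 0) + (1/((m:ℂ)+1)) • by' (m+1) = _
      rw [Finset.sum_range_succ, Finset.sum_range_one, hby 0, hby (m+1), ← hz1]
      have hc0 : (Nat.factorial m : ℂ) / (Nat.factorial (0 + m) : ℂ) = 1 := by
        rw [Nat.zero_add]; exact div_self (hfact m)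
      have hc1 : (Nat.factorial m : ℂ) / (Nat.factorial (1 + m) : ℂ) = 1/((m:ℂ)+1) := by
        rw [show 1 + m = m + 1 from by omega, Nat.factorial_succ]
        push_cast
        have h1 : ((m:ℂ)+1) ≠ 0 := Nat.cast_add_one_ne_zero m
        field_simp
        exact div_self (hfact m)
      rw [hc0, hc1, one_smul, hzt0, show (0:ℕ) + m + 1 = m + 1 from by omega,
        show 1 + m + 1 = m + 1 + 1 from by omega]
  | succ K hK1 ih =>
      intro hKk m
      have hKk' : K ≤ k := by omega
      have ih' := ih hKk'
      -- zt (K+1) equals the block-0 value of the K-th iterate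
      have hz : zt (K + 1) = (Astar n M)^[K] by' 0 := by
        rw [hztr (K+1) (by omega) hKk, ih' 0]
        refine Finset.sum_congr (by norm_num) ?_
        intro j hj
        rw [show j + 0 = j from by omega, show K + 1 - 1 - j = K - j from by omega]
        congr 1
        norm_num [Nat.factorial]
      rw [Function.iterate_succ_apply']
      show mvE ((Nmat n M (m+1))ᴴ) ((Astar n M)^[K] by' 0)
            + (1/((m:ℂ)+1)) • (Astar n M)^[K] by' (m+1) = _
      rw [← hz, ih' (m+1), Finset.smul_sum, add_comm]
      conv_rhs => rw [Finset.sum_range_succ']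
      congr 1
      · -- tails match
        refine Finset.sum_congr rfl ?_
        intro j hj
        rw [smul_smul]
        rw [show j + 1 + m = j + (m + 1) from by omega,
          show K + 1 - (j+1) = K - j from by omega]
        congr 1
        rw [show j + (m + 1) = (j + m) + 1 from by omega, Nat.factorial_succ (j+m),
          Nat.factorial_succ m]
        push_cast
        have h1 : ((m:ℂ)+1) ≠ 0 := Nat.cast_add_one_ne_zero m
        have h2 : ((j:ℂ) + m + 1) ≠ 0 := by
          have : ((j + m : ℕ) : ℂ) + 1 ≠ 0 := Nat.cast_add_one_ne_zero (j + m)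
          push_cast at this; exact this
        field_simp
      · -- head term
        rw [show (0:ℕ) + m = m from by omega, div_self (hfact m), one_smul,
          show K + 1 - 0 = K + 1 from rfl]
end

section
/- Let k_ã ≥ 1 be an integer, let ã₁, …, ã_{k_ã} ∈ ℂⁿ, and let 𝐚̃ be the block vector whose m-th block is Σ_{j=1}^{k_ã} ((m-1)!/(j+m-2)!)·N_{j+m-1}^*·ã_j for every m ≥ 1. Define b̃₁ := Σ_{j=1}^{k_ã} (1/(j-1)!)·N_j^*·ã_j and b̃_j := ã_{j-1} for 2 ≤ j ≤ k_ã + 1. Then 𝐀*𝐚̃ is the block vector whose m-th block equals Σ_{j=1}^{k_ã+1} ((m-1)!/(j+m-2)!)·N_{j+m-1}^*·b̃_j for every m ≥ 1. -/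
open Matrix

/-- the action of `𝐀*` on a block vector of "left" type.
Blocks are indexed from `0` (block `m` is the paper's block `m+1`); the
representing vectors `ã_j` are `at j` for `j < k_ã`, the `m`-th block of `𝐚̃` is
`Σ_{j<k_ã} (m!/(j+m)!) N_{j+m+1}^* ã_j`, and the new representing vectors are
`b̃₀ = Σ_{j<k_ã} (1/j!) N_{j+1}^* ã_j` and `b̃_j = ã_{j-1}` for `1 ≤ j ≤ k_ã`. -/
theorem Astar_action_on_left_type
    (n : ℕ) (hn : 1 ≤ n) (ρ : ℝ) (hρ : 0 < ρ)
    (M : ℂ → Matrix (Fin n) (Fin n) ℂ)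
    (hM : ∀ i i', AnalyticOnNhd ℂ (fun z => M z i i') (Metric.closedBall (0:ℂ) ρ))
    (hM0 : IsUnit (M 0))
    (kat : ℕ) (hkat : 1 ≤ kat)
    (at' : ℕ → EuclideanSpace ℂ (Fin n))
    (At : ℕ → EuclideanSpace ℂ (Fin n))
    (hAt : ∀ m : ℕ, At m = ∑ j ∈ Finset.range kat,
      ((Nat.factorial m : ℂ) / (Nat.factorial (j + m) : ℂ)) •
        mvE ((Nmat n M (j + m + 1))ᴴ) (at' j))
    (bt : ℕ → EuclideanSpace ℂ (Fin n))
    (hbt0 : bt 0 = ∑ j ∈ Finset.range kat,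
      (1/(Nat.factorial j : ℂ)) • mvE ((Nmat n M (j+1))ᴴ) (at' j))
    (hbti : ∀ j : ℕ, 1 ≤ j → j ≤ kat → bt j = at' (j-1)) :
    ∀ m : ℕ, Astar n M At m =
      ∑ j ∈ Finset.range (kat+1),
        ((Nat.factorial m : ℂ) / (Nat.factorial (j + m) : ℂ)) •
          mvE ((Nmat n M (j + m + 1))ᴴ) (bt j) := by
  intro m
  have hAt0 : At 0 = bt 0 := by
    rw [hAt 0, hbt0]
    apply Finset.sum_congr rfl
    intro j hj
    norm_num
  rw [Astar, Finset.sum_range_succ', hAt (m+1), hAt0]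
  simp only [Nat.zero_add]
  have h0 : ((Nat.factorial m : ℂ) / (Nat.factorial m : ℂ)) = 1 :=
    div_self (by exact_mod_cast Nat.factorial_ne_zero m)
  rw [h0, one_smul]
  rw [add_comm]
  congr 1
  rw [Finset.smul_sum]
  apply Finset.sum_congr rfl
  intro j hj
  rw [hbti (j+1) (by omega) (by exact_mod_cast Finset.mem_range.mp hj), smul_smul]
  have hidx : j + (m+1) + 1 = (j+1) + m + 1 := by omega
  have hidx2 : j + (m+1) = (j+1) + m := by omega
  rw [hidx, hidx2]
  congr 1
  have hne : ((Nat.factorial (j+1+m) : ℂ)) ≠ 0 := by exact_mod_cast Nat.factorial_ne_zero _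
  have hfac : (Nat.factorial (m+1) : ℂ) = ((m:ℂ)+1) * (Nat.factorial m : ℂ) := by
    push_cast [Nat.factorial_succ]
    ring
  have hm1 : ((m:ℂ)+1) ≠ 0 := Nat.cast_add_one_ne_zero m
  rw [hfac]
  field_simp
end

section
/- Let λ ∈ ℂ and let w = (w_j)_{j≥1} be a block vector satisfying λ·(N_j^*·w₁ + (1/j)·w_{j+1}) = w_j for all j ≥ 1. Then for every integer k ≥ 1, w₁ = Σ_{j=1}^{k} (λ^j/(j-1)!)·N_j^*·w₁ + (λ^k/k!)·w_{k+1}. -/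
open Matrix

/-- if `λ 𝐀* w = w` blockwise, then for every `k ≥ 1`,
`w₁ = Σ_{j=1}^{k} (λ^j/(j-1)!) N_j^* w₁ + (λ^k/k!) w_{k+1}`.
Blocks are indexed from `0` (`w j` is the paper's `w_{j+1}`), and the sum index
`j` below corresponds to the paper's `j+1 ∈ {1,…,k}`. -/
theorem partial_sum_identity
    (n : ℕ) (hn : 1 ≤ n) (ρ : ℝ) (hρ : 0 < ρ)
    (M : ℂ → Matrix (Fin n) (Fin n) ℂ)
    (hM : ∀ i i', AnalyticOnNhd ℂ (fun z => M z i i') (Metric.closedBall (0:ℂ) ρ))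
    (hM0 : IsUnit (M 0))
    (lam : ℂ)
    (w : ℕ → EuclideanSpace ℂ (Fin n))
    (heig : ∀ j : ℕ,
      lam • (mvE ((Nmat n M (j+1))ᴴ) (w 0) + (1/((j:ℂ)+1)) • w (j+1)) = w j) :
    ∀ k : ℕ, 1 ≤ k →
      w 0 = (∑ j ∈ Finset.range k,
          (lam^(j+1) / (Nat.factorial j : ℂ)) • mvE ((Nmat n M (j+1))ᴴ) (w 0)) +
        (lam^k / (Nat.factorial k : ℂ)) • w k := by
  intro k hk
  induction k with
  | zero => omega
  | succ k ih =>
    rcases Nat.eq_zero_or_pos k with hk0 | hk1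
    · subst hk0
      have h := (heig 0).symm
      simp only [zero_add, Finset.range_one, Finset.sum_singleton]
      nth_rewrite 1 [h]
      simp [smul_add, smul_smul, Nat.factorial]
    · have ih' := ih hk1
      have hkne : ((k:ℂ)+1) ≠ 0 := Nat.cast_add_one_ne_zero k
      have hfac : (Nat.factorial k : ℂ) ≠ 0 := by
        exact_mod_cast Nat.factorial_ne_zero k
      have hw : w k = lam • mvE ((Nmat n M (k+1))ᴴ) (w 0)
          + (lam/((k:ℂ)+1)) • w (k+1) := by
        rw [← heig k, smul_add, smul_smul]
        ring_nf
      calc w 0 = (∑ j ∈ Finset.range k,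
            (lam^(j+1) / (Nat.factorial j : ℂ)) • mvE ((Nmat n M (j+1))ᴴ) (w 0)) +
          (lam^k / (Nat.factorial k : ℂ)) • w k := ih'
        _ = (∑ j ∈ Finset.range k,
            (lam^(j+1) / (Nat.factorial j : ℂ)) • mvE ((Nmat n M (j+1))ᴴ) (w 0)) +
          ((lam^(k+1) / (Nat.factorial k : ℂ)) • mvE ((Nmat n M (k+1))ᴴ) (w 0) +
            (lam^(k+1) / (Nat.factorial (k+1) : ℂ)) • w (k+1)) := by
            rw [hw, smul_add, smul_smul, smul_smul]
            congr 2
            · ring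
            · rw [Nat.factorial_succ]
              push_cast
              field_simp
              ring
        _ = _ := by rw [Finset.sum_range_succ, add_assoc]
end

section
/- Let λ ∈ ℂ with |λ| < ρ and let w = (w_j)_{j≥1} ∈ ℓ₁(ρ) be a block vector satisfying λ·(N_j^*·w₁ + (1/j)·w_{j+1}) = w_j for all j ≥ 1. Then the series Σ_{j=1}^∞ (λ^j/(j-1)!)·N_j^*·w₁ converges and equals w₁. -/
open Matrix

/-- if `|λ| < ρ`, `w ∈ ℓ₁(ρ)` and `λ 𝐀* w = w` blockwise, then
`Σ_{j≥1} (λ^j/(j-1)!) N_j^* w₁` converges to `w₁`.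
Blocks are indexed from `0` (`w j` is the paper's `w_{j+1}`), and the series
index `j` below corresponds to the paper's `j+1`. -/
theorem first_block_series
    (n : ℕ) (hn : 1 ≤ n) (ρ : ℝ) (hρ : 0 < ρ)
    (M : ℂ → Matrix (Fin n) (Fin n) ℂ)
    (hM : ∀ i i', AnalyticOnNhd ℂ (fun z => M z i i') (Metric.closedBall (0:ℂ) ρ))
    (hM0 : IsUnit (M 0))
    (lam : ℂ) (hlamρ : ‖lam‖ < ρ)
    (w : ℕ → EuclideanSpace ℂ (Fin n))
    (hwl1 : Summable fun j : ℕ => ρ^(j+1) / (Nat.factorial (j+1)) * ‖w j‖)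
    (heig : ∀ j : ℕ,
      lam • (mvE ((Nmat n M (j+1))ᴴ) (w 0) + (1/((j:ℂ)+1)) • w (j+1)) = w j) :
    HasSum (fun j : ℕ =>
      (lam^(j+1) / (Nat.factorial j : ℂ)) • mvE ((Nmat n M (j+1))ᴴ) (w 0)) (w 0) := by
  set f : ℕ → EuclideanSpace ℂ (Fin n) :=
    fun j => (lam^(j+1) / (Nat.factorial j : ℂ)) • mvE ((Nmat n M (j+1))ᴴ) (w 0) with hf
  set g : ℕ → EuclideanSpace ℂ (Fin n) :=
    fun j => (lam^j / (Nat.factorial j : ℂ)) • w j with hg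
  -- key pointwise identity: f j = g j - g (j+1)
  have hfg : ∀ j : ℕ, f j = g j - g (j+1) := by
    intro j
    have hj1 : ((j:ℂ)+1) ≠ 0 := by
      exact_mod_cast (Nat.cast_ne_zero (R := ℂ)).mpr (Nat.succ_ne_zero j)
    have h := heig j
    rw [smul_add, smul_smul] at h
    have hA : lam • mvE ((Nmat n M (j+1))ᴴ) (w 0)
        = w j - (lam * (1/((j:ℂ)+1))) • w (j+1) := by
      rw [eq_sub_iff_add_eq]; exact h
    have hc : lam^(j+1) / (Nat.factorial j : ℂ) = (lam^j / (Nat.factorial j : ℂ)) * lam := by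
      rw [pow_succ]; ring
    have h1 : f j = (lam^j / (Nat.factorial j : ℂ)) •
        (lam • mvE ((Nmat n M (j+1))ᴴ) (w 0)) := by
      rw [hf, smul_smul]
      simp only [hc]
    rw [h1, hA, smul_sub, smul_smul, hg]
    congr 2
    have hfacj : ((Nat.factorial j : ℂ)) ≠ 0 := by
      exact_mod_cast (Nat.cast_ne_zero (R := ℂ)).mpr (Nat.factorial_ne_zero j)
    have hfs : ((Nat.factorial (j+1) : ℂ)) = ((j:ℂ)+1) * (Nat.factorial j : ℂ) := by
      rw [Nat.factorial_succ]; push_cast; ring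
    rw [hfs, pow_succ]
    field_simp
  -- norm of g
  have hgnorm : ∀ j : ℕ, ‖g j‖ = ‖lam‖^j / (Nat.factorial j) * ‖w j‖ := by
    intro j
    rw [hg]
    simp only [norm_smul]
    congr 1
    rw [norm_div, norm_pow]
    congr 1
    rw [Complex.norm_natCast]
  set r : ℝ := ‖lam‖ / ρ with hrdef
  have hr0 : 0 ≤ r := div_nonneg (norm_nonneg lam) hρ.le
  have hr1 : r < 1 := (div_lt_one hρ).mpr hlamρ
  -- rewrite the norm of g in terms of the summable majorant
  have hkey : ∀ j : ℕ, ‖g j‖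
      = (1/ρ) * (((j:ℝ)+1) * r^j) * (ρ^(j+1) / (Nat.factorial (j+1)) * ‖w j‖) := by
    intro j
    rw [hgnorm j, hrdef, div_pow, Nat.factorial_succ, pow_succ]
    have hρ0 : ρ ≠ 0 := hρ.ne'
    have hρj : ρ^j ≠ 0 := pow_ne_zero j hρ0
    have hfacj : ((Nat.factorial j : ℝ)) ≠ 0 := by
      exact_mod_cast Nat.factorial_ne_zero j
    have hj1 : ((j:ℝ)+1) ≠ 0 := by positivity
    push_cast
    field_simp
  -- the polynomial-times-geometric factor tends to 0
  have hpoly : Filter.Tendsto (fun j : ℕ => ((j:ℝ)+1) * r^j) Filter.atTop (nhds 0) := by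
    have h1 : Filter.Tendsto (fun j : ℕ => (j:ℝ) * r^j) Filter.atTop (nhds 0) := by
      simpa only [pow_one] using tendsto_pow_const_mul_const_pow_of_lt_one 1 hr0 hr1
    have h2 : Filter.Tendsto (fun j : ℕ => r^j) Filter.atTop (nhds 0) :=
      tendsto_pow_atTop_nhds_zero_of_lt_one hr0 hr1
    have := h1.add h2
    simpa [add_mul] using this
  -- the majorant terms tend to 0
  have ha0 : Filter.Tendsto (fun j : ℕ => ρ^(j+1) / (Nat.factorial (j+1)) * ‖w j‖)
      Filter.atTop (nhds 0) := hwl1.tendsto_atTop_zero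
  -- g tends to 0
  have hgto : Filter.Tendsto g Filter.atTop (nhds (0 : EuclideanSpace ℂ (Fin n))) := by
    rw [tendsto_zero_iff_norm_tendsto_zero]
    have : Filter.Tendsto (fun j : ℕ =>
        (1/ρ) * (((j:ℝ)+1) * r^j) * (ρ^(j+1) / (Nat.factorial (j+1)) * ‖w j‖))
        Filter.atTop (nhds ((1/ρ) * 0 * 0)) :=
      ((hpoly.const_mul (1/ρ)).mul ha0)
    simp only [mul_zero] at this
    exact this.congr (fun j => (hkey j).symm)
  -- summability of g (in norm)
  have hgs : Summable g := by
    obtain ⟨C, hC⟩ : ∃ C : ℝ, ∀ j : ℕ, ((j:ℝ)+1) * r^j ≤ C := by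
      obtain ⟨C, hC⟩ := hpoly.bddAbove_range
      exact ⟨C, fun j => hC ⟨j, rfl⟩⟩
    apply Summable.of_norm_bounded
      (g := fun j => (1/ρ) * C * (ρ^(j+1) / (Nat.factorial (j+1)) * ‖w j‖))
      (hwl1.mul_left _)
    intro j
    rw [hkey j]
    have hterm : 0 ≤ ρ^(j+1) / (Nat.factorial (j+1)) * ‖w j‖ := by positivity
    have h1ρ : (0:ℝ) ≤ 1/ρ := by positivity
    apply mul_le_mul_of_nonneg_right _ hterm
    exact mul_le_mul_of_nonneg_left (hC j) h1ρ
  -- summability of f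
  have hgs' : Summable (fun j => g (j+1)) := (summable_nat_add_iff 1).mpr hgs
  have hfs : Summable f := by
    have := hgs.sub hgs'
    exact this.congr (fun j => (hfg j).symm)
  -- conclude via partial sums
  rw [hfs.hasSum_iff_tendsto_nat]
  have hsum : ∀ N : ℕ, ∑ j ∈ Finset.range N, f j = g 0 - g N := by
    intro N
    rw [Finset.sum_congr rfl (fun j _ => hfg j)]
    exact Finset.sum_range_sub' g N
  have hg0 : g 0 = w 0 := by simp [hg]
  have : Filter.Tendsto (fun N : ℕ => g 0 - g N) Filter.atTop (nhds (g 0 - 0)) :=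
    Filter.Tendsto.sub tendsto_const_nhds hgto
  rw [sub_zero, hg0] at this
  rw [hg0] at hsum
  exact this.congr (fun N => (hsum N).symm)
end

section
/- Suppose M_ρ > 0 is a constant such that the operator norm satisfies ‖M^{(j)}(0)‖ ≤ M_ρ·j!/ρ^j for all j ≥ 1. Let λ ∈ ℂ with |λ| < ρ and let z ∈ ℂⁿ. Define the block vector w by w_k := Σ_{j=1}^∞ ((k-1)!/(j+k-2)!)·λ^j·N_{j+k-1}^*·z for k ≥ 1. Then each of these series converges absolutely and w ∈ ℓ₁(ρ), i.e., Σ_{k=1}^∞ (ρ^k/k!)·‖w_k‖ < ∞. -/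
open Matrix
open scoped ENNReal NNReal

/-- The operator norm of a matrix, viewed as an operator on Euclidean space. -/
noncomputable def opNormE {n : ℕ} (A : Matrix (Fin n) (Fin n) ℂ) : ℝ :=
  ‖Matrix.toEuclideanCLM (𝕜 := ℂ) A‖

open scoped Matrix.Norms.L2Operator in
lemma opNormE_eq {n : ℕ} (A : Matrix (Fin n) (Fin n) ℂ) : opNormE A = ‖A‖ := rfl

open scoped Matrix.Norms.L2Operator in
lemma opNormE_conjTranspose {n : ℕ} (A : Matrix (Fin n) (Fin n) ℂ) :
    opNormE Aᴴ = opNormE A := by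
  rw [opNormE_eq, opNormE_eq, Matrix.l2_opNorm_conjTranspose]

open scoped Matrix.Norms.L2Operator in
lemma opNormE_mul_le {n : ℕ} (A B : Matrix (Fin n) (Fin n) ℂ) :
    opNormE (A * B) ≤ opNormE A * opNormE B := by
  rw [opNormE_eq, opNormE_eq, opNormE_eq]
  exact norm_mul_le A B

open scoped Matrix.Norms.L2Operator in
lemma opNormE_smul {n : ℕ} (c : ℂ) (A : Matrix (Fin n) (Fin n) ℂ) :
    opNormE (c • A) = ‖c‖ * opNormE A := by
  rw [opNormE_eq, opNormE_eq]
  exact norm_smul c A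

open scoped Matrix.Norms.L2Operator in
lemma opNormE_nonneg {n : ℕ} (A : Matrix (Fin n) (Fin n) ℂ) : 0 ≤ opNormE A :=
  norm_nonneg _

lemma norm_mvE_le {n : ℕ} (A : Matrix (Fin n) (Fin n) ℂ) (x : EuclideanSpace ℂ (Fin n)) :
    ‖mvE A x‖ ≤ opNormE A * ‖x‖ := by
  have : mvE A x = Matrix.toEuclideanCLM (𝕜 := ℂ) A x := by
    rfl
  rw [this]
  exact (Matrix.toEuclideanCLM (𝕜 := ℂ) A).le_opNorm x

lemma euclidean_norm_le_sum {n : ℕ} (y : EuclideanSpace ℂ (Fin n)) :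
    ‖y‖ ≤ ∑ i, ‖y i‖ := by
  rw [EuclideanSpace.norm_eq]
  have h1 : ∑ i, ‖y i‖ ^ 2 ≤ (∑ i, ‖y i‖) ^ 2 :=
    Finset.sum_sq_le_sq_sum_of_nonneg (fun i _ => norm_nonneg _)
  calc Real.sqrt (∑ i, ‖y i‖ ^ 2) ≤ Real.sqrt ((∑ i, ‖y i‖) ^ 2) := Real.sqrt_le_sqrt h1
    _ = ∑ i, ‖y i‖ := Real.sqrt_sq (Finset.sum_nonneg fun i _ => norm_nonneg _)

lemma opNormE_le_sum {n : ℕ} (A : Matrix (Fin n) (Fin n) ℂ) :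
    opNormE A ≤ ∑ i, ∑ j, ‖A i j‖ := by
  refine ContinuousLinearMap.opNorm_le_bound _
    (Finset.sum_nonneg fun i _ => Finset.sum_nonneg fun j _ => norm_nonneg _) fun x => ?_
  have hx : Matrix.toEuclideanCLM (𝕜 := ℂ) A x = mvE A x := rfl
  rw [hx]
  calc ‖mvE A x‖ ≤ ∑ i, ‖mvE A x i‖ := euclidean_norm_le_sum _
    _ ≤ ∑ i, ∑ j, ‖A i j‖ * ‖x‖ := by
        refine Finset.sum_le_sum fun i _ => ?_
        have : mvE A x i = ∑ j, A i j * x j := rfl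
        rw [this]
        refine (norm_sum_le _ _).trans (Finset.sum_le_sum fun j _ => ?_)
        rw [norm_mul]
        have hxj : ‖x j‖ ≤ ‖x‖ := by
          rw [EuclideanSpace.norm_eq]
          have h2 : ‖x j‖^2 ≤ ∑ i, ‖x i‖^2 :=
            Finset.single_le_sum (f := fun i => ‖x i‖^2) (fun i _ => sq_nonneg _)
              (Finset.mem_univ j)
          calc ‖x j‖ = Real.sqrt (‖x j‖^2) := (Real.sqrt_sq (norm_nonneg _)).symm
            _ ≤ _ := Real.sqrt_le_sqrt h2
        exact mul_le_mul_of_nonneg_left hxj (norm_nonneg _)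
    _ = (∑ i, ∑ j, ‖A i j‖) * ‖x‖ := by rw [Finset.sum_mul]; simp [Finset.sum_mul]

lemma cauchy_deriv_bound {f : ℂ → ℂ} {R ρ' : ℝ} (hρ' : 0 < ρ') (hRρ' : ρ' < R)
    (hf : DifferentiableOn ℂ f (Metric.closedBall (0:ℂ) R)) :
    ∃ C > 0, ∀ m : ℕ, ‖iteratedDeriv m f 0‖ ≤ C * m.factorial / ρ'^m := by
  have hR0 : (0:ℝ) < R := hρ'.trans hRρ'
  set R' : NNReal := R.toNNReal with hR'
  have hR'R : (R' : ℝ) = R := Real.coe_toNNReal _ hR0.le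
  have hfd : DifferentiableOn ℂ f (Metric.closedBall (0:ℂ) R') := by rwa [hR'R]
  have h := hfd.hasFPowerSeriesOnBall (by simp [hR', hR0])
  set p := cauchyPowerSeries f 0 R' with hp
  set r : NNReal := ρ'.toNNReal with hr
  have hrρ' : (r : ℝ) = ρ' := Real.coe_toNNReal _ hρ'.le
  have hrR' : r < R' := by rw [← NNReal.coe_lt_coe, hrρ', hR'R]; exact hRρ'
  have hrrad : (r : ℝ≥0∞) < p.radius :=
    lt_of_lt_of_le (by exact_mod_cast hrR') h.r_le
  obtain ⟨C, hC, hCb⟩ := p.norm_le_div_pow_of_pos_of_lt_radius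
    (by simp [hr, hρ'] : 0 < r) hrrad
  refine ⟨C, hC, fun m => ?_⟩
  have hid : iteratedDeriv m f 0 = (m.factorial : ℂ) • p m (fun _ => 1) := by
    rw [iteratedDeriv_eq_iteratedFDeriv, ← h.factorial_smul (1:ℂ) m]
    simp [← Nat.cast_smul_eq_nsmul ℂ]
  rw [hid, norm_smul]
  have h1 : ‖p m (fun _ => 1)‖ ≤ ‖p m‖ := by
    have := (p m).le_opNorm (fun _ => (1:ℂ))
    simpa using this
  have h2 : ‖p m‖ ≤ C / ρ' ^ m := by rw [← hrρ']; exact hCb m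
  have : ‖((m.factorial : ℂ))‖ = (m.factorial : ℝ) := by
    simp
  rw [this]
  calc (m.factorial : ℝ) * ‖p m (fun _ => 1)‖
      ≤ (m.factorial : ℝ) * (C / ρ' ^ m) := by
        exact mul_le_mul_of_nonneg_left (h1.trans h2) (by positivity)
    _ = C * m.factorial / ρ' ^ m := by ring

lemma Mder_bound (n : ℕ) (ρ : ℝ) (hρ : 0 < ρ)
    (M : ℂ → Matrix (Fin n) (Fin n) ℂ)
    (hM : ∀ i i', AnalyticOnNhd ℂ (fun z => M z i i') (Metric.closedBall (0:ℂ) ρ)) :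
    ∃ ρ' > ρ, ∃ C > 0, ∀ m : ℕ, opNormE (Mder n M m) ≤ C * m.factorial / ρ'^m := by
  set U : Set ℂ := ⋂ (i : Fin n), ⋂ (i' : Fin n), { z | AnalyticAt ℂ (fun w => M w i i') z }
    with hU
  have hUopen : IsOpen U :=
    isOpen_iInter_of_finite fun i => isOpen_iInter_of_finite fun i' => isOpen_analyticAt ℂ _
  have hsub : Metric.closedBall (0:ℂ) ρ ⊆ U := by
    intro z hz
    simp only [hU, Set.mem_iInter, Set.mem_setOf_eq]
    exact fun i i' => hM i i' z hz
  obtain ⟨δ, hδ, hsub2⟩ :=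
    (isCompact_closedBall (0:ℂ) ρ).exists_cthickening_subset_open hUopen hsub
  rw [cthickening_closedBall hδ.le hρ.le] at hsub2
  set ρ' : ℝ := ρ + δ/2 with hρ'
  have hρ'pos : 0 < ρ' := by positivity
  have hρ'lt : ρ' < δ + ρ := by rw [hρ']; linarith
  have hdiff : ∀ (q : Fin n × Fin n),
      DifferentiableOn ℂ (fun z => M z q.1 q.2) (Metric.closedBall (0:ℂ) (δ + ρ)) := by
    intro q z hz
    have hz' : z ∈ U := hsub2 hz
    simp only [hU, Set.mem_iInter, Set.mem_setOf_eq] at hz'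
    exact (hz' q.1 q.2).differentiableAt.differentiableWithinAt
  choose C hCpos hC using fun q : Fin n × Fin n =>
    cauchy_deriv_bound hρ'pos hρ'lt (hdiff q)
  have hCsum : 0 ≤ ∑ q : Fin n × Fin n, C q := Finset.sum_nonneg fun q _ => (hCpos q).le
  refine ⟨ρ', by rw [hρ']; linarith, 1 + ∑ q : Fin n × Fin n, C q, by linarith, fun m => ?_⟩
  have h1 : opNormE (Mder n M m) ≤ ∑ i, ∑ i', ‖Mder n M m i i'‖ := opNormE_le_sum _
  have h2 : ∑ i, ∑ i', ‖Mder n M m i i'‖ ≤ ∑ q : Fin n × Fin n, C q * m.factorial / ρ'^m := by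
    rw [← Finset.sum_product']
    refine Finset.sum_le_sum fun q _ => ?_
    exact hC q m
  refine h1.trans (h2.trans ?_)
  have : ∑ q : Fin n × Fin n, C q * m.factorial / ρ'^m
      = (∑ q : Fin n × Fin n, C q) * m.factorial / ρ'^m := by
    rw [← Finset.sum_div, ← Finset.sum_mul]
  rw [this]
  have hfac : (0:ℝ) ≤ (m.factorial : ℝ) / ρ'^m := by positivity
  calc (∑ q : Fin n × Fin n, C q) * m.factorial / ρ'^m
      = (∑ q : Fin n × Fin n, C q) * ((m.factorial : ℝ) / ρ'^m) := by ring
    _ ≤ (1 + ∑ q : Fin n × Fin n, C q) * ((m.factorial : ℝ) / ρ'^m) := by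
        refine mul_le_mul_of_nonneg_right (by linarith) hfac
    _ = (1 + ∑ q : Fin n × Fin n, C q) * m.factorial / ρ'^m := by ring

lemma term_le (n : ℕ) (M : ℂ → Matrix (Fin n) (Fin n) ℂ) (r Cb : ℝ) (hr : 0 < r)
    (hb : ∀ m : ℕ, 1 ≤ m → opNormE (Mder n M m) ≤ Cb * m.factorial / r^m)
    (lam : ℂ) (z : EuclideanSpace ℂ (Fin n)) (j k : ℕ) :
    ‖((Nat.factorial k : ℂ) / (Nat.factorial (j + k)) * lam^(j+1)) •
        mvE ((Nmat n M (j + k + 1))ᴴ) z‖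
      ≤ opNormE ((M 0)⁻¹) * Cb * ‖z‖ * (Nat.factorial k) *
          ‖lam‖^(j+1) / r^(j+k+1) := by
  set L := ‖lam‖ with hL
  set C₁ := opNormE ((M 0)⁻¹) with hC₁
  have hC₁0 : 0 ≤ C₁ := opNormE_nonneg _
  have hc : ‖((Nat.factorial k : ℂ) / (Nat.factorial (j + k)) * lam^(j+1))‖
      = (Nat.factorial k : ℝ) / ((j+k).factorial) * L^(j+1) := by
    rw [norm_mul, norm_div, norm_pow]
    simp [Complex.norm_natCast, hL]
  have hscal0 : (0:ℝ) ≤ (Nat.factorial k : ℝ) / ((j+k).factorial) * L^(j+1) := by positivity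
  have hNop : opNormE ((Nmat n M (j+k+1))ᴴ)
      ≤ (1/((j+k+1):ℝ)) * (C₁ * (Cb * ((j+k+1).factorial) / r^(j+k+1))) := by
    rw [opNormE_conjTranspose]
    unfold Nmat
    rw [opNormE_smul]
    have habs : ‖(-(1/((j+k+1 : ℕ):ℂ)))‖ = 1/((j+k+1):ℝ) := by
      rw [norm_neg, norm_div, norm_one, Complex.norm_natCast]
      push_cast
      ring
    rw [habs]
    refine mul_le_mul_of_nonneg_left ?_ (by positivity)
    refine (opNormE_mul_le _ _).trans ?_
    exact mul_le_mul_of_nonneg_left (hb (j+k+1) (by omega)) hC₁0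
  have hmv : ‖mvE ((Nmat n M (j+k+1))ᴴ) z‖
      ≤ (1/((j+k+1):ℝ)) * (C₁ * (Cb * ((j+k+1).factorial) / r^(j+k+1))) * ‖z‖ := by
    refine (norm_mvE_le _ _).trans ?_
    exact mul_le_mul_of_nonneg_right hNop (norm_nonneg z)
  calc ‖((Nat.factorial k : ℂ) / (Nat.factorial (j + k)) * lam^(j+1)) •
        mvE ((Nmat n M (j + k + 1))ᴴ) z‖
      = ((Nat.factorial k : ℝ) / ((j+k).factorial) * L^(j+1)) *
          ‖mvE ((Nmat n M (j+k+1))ᴴ) z‖ := by rw [norm_smul, hc]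
    _ ≤ ((Nat.factorial k : ℝ) / ((j+k).factorial) * L^(j+1)) *
          ((1/((j+k+1):ℝ)) * (C₁ * (Cb * ((j+k+1).factorial) / r^(j+k+1))) * ‖z‖) :=
        mul_le_mul_of_nonneg_left hmv hscal0
    _ = C₁ * Cb * ‖z‖ * (Nat.factorial k) * L^(j+1) / r^(j+k+1) := by
        have hfac : (((j+k+1).factorial : ℝ)) = ((j+k+1):ℝ) * ((j+k).factorial : ℝ) := by
          exact_mod_cast Nat.factorial_succ (j+k)
        have h1 : ((j+k).factorial : ℝ) ≠ 0 := Nat.cast_ne_zero.mpr (Nat.factorial_ne_zero _)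
        have h2 : ((j+k+1):ℝ) ≠ 0 := by positivity
        have h3 : r^(j+k+1) ≠ 0 := by positivity
        rw [hfac]
        field_simp

/-- if `‖M^{(j)}(0)‖ ≤ M_ρ j!/ρ^j` for all `j ≥ 1`, `|λ| < ρ` and
`z ∈ ℂⁿ`, then the series `w_k := Σ_{j≥1} ((k-1)!/(j+k-2)!) λ^j N_{j+k-1}^* z`
converge absolutely and `w ∈ ℓ₁(ρ)`.
Blocks are indexed from `0` (`w k` is the paper's `w_{k+1}`) and the series
index `j` below corresponds to the paper's `j+1`. -/
theorem w_mem_l1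
    (n : ℕ) (hn : 1 ≤ n) (ρ : ℝ) (hρ : 0 < ρ)
    (M : ℂ → Matrix (Fin n) (Fin n) ℂ)
    (hM : ∀ i i', AnalyticOnNhd ℂ (fun z => M z i i') (Metric.closedBall (0:ℂ) ρ))
    (hM0 : IsUnit (M 0))
    (Mρ : ℝ) (hMρpos : 0 < Mρ)
    (hMρ : ∀ j : ℕ, 1 ≤ j → opNormE (Mder n M j) ≤ Mρ * (Nat.factorial j) / ρ^j)
    (lam : ℂ) (hlamρ : ‖lam‖ < ρ)
    (z : EuclideanSpace ℂ (Fin n))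
    (w : ℕ → EuclideanSpace ℂ (Fin n))
    (hw : ∀ k : ℕ, w k = ∑' j : ℕ,
      ((Nat.factorial k : ℂ) / (Nat.factorial (j + k)) * lam^(j+1)) •
        mvE ((Nmat n M (j + k + 1))ᴴ) z) :
    (∀ k : ℕ, Summable fun j : ℕ =>
        ‖((Nat.factorial k : ℂ) / (Nat.factorial (j + k)) * lam^(j+1)) •
          mvE ((Nmat n M (j + k + 1))ᴴ) z‖) ∧
      Summable fun k : ℕ => ρ^(k+1) / (Nat.factorial (k+1)) * ‖w k‖ := by
  have hρne : ρ ≠ 0 := hρ.ne'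
  set L := ‖lam‖ with hLdef
  have hL0 : 0 ≤ L := norm_nonneg lam
  set C₁ := opNormE ((M 0)⁻¹) with hC₁def
  have hC₁0 : 0 ≤ C₁ := opNormE_nonneg _
  have hq : L / ρ < 1 := by rw [div_lt_one hρ]; exact hlamρ
  have hq0 : 0 ≤ L / ρ := by positivity
  have hpart1 : ∀ k : ℕ, Summable fun j : ℕ =>
      ‖((Nat.factorial k : ℂ) / (Nat.factorial (j + k)) * lam^(j+1)) •
        mvE ((Nmat n M (j + k + 1))ᴴ) z‖ := by
    intro k
    refine Summable.of_nonneg_of_le (fun j => norm_nonneg _) (fun j => ?_)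
      ((summable_geometric_of_lt_one hq0 hq).mul_left
        (C₁ * Mρ * ‖z‖ * (Nat.factorial k) * L / ρ^(k+1)))
    refine (term_le n M ρ Mρ hρ hMρ lam z j k).trans_eq ?_
    rw [← hC₁def, div_pow]
    field_simp
    ring
  refine ⟨hpart1, ?_⟩
  obtain ⟨ρ', hρ'gt, C₂, hC₂, hMd2⟩ := Mder_bound n ρ hρ M hM
  have hρ'0 : 0 < ρ' := hρ.trans hρ'gt
  have hρ'ne : ρ' ≠ 0 := hρ'0.ne'
  have hq'0 : 0 ≤ L / ρ' := by positivity
  have hq'1 : L / ρ' < 1 := by rw [div_lt_one hρ'0]; linarith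
  have h1q' : 0 < 1 - L / ρ' := by linarith
  set D : ℕ → ℝ := fun k => C₁ * C₂ * ‖z‖ * (Nat.factorial k) * L / ρ'^(k+1) with hDdef
  have hwk : ∀ k, ‖w k‖ ≤ D k * (1 - L / ρ')⁻¹ := by
    intro k
    have hmaj : Summable (fun j : ℕ => D k * (L / ρ')^j) :=
      (summable_geometric_of_lt_one hq'0 hq'1).mul_left _
    have hle : ∀ j : ℕ, ‖((Nat.factorial k : ℂ) / (Nat.factorial (j + k)) * lam^(j+1)) •
        mvE ((Nmat n M (j + k + 1))ᴴ) z‖ ≤ D k * (L / ρ')^j := by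
      intro j
      refine (term_le n M ρ' C₂ hρ'0 (fun m _ => hMd2 m) lam z j k).trans_eq ?_
      rw [← hC₁def, hDdef, div_pow]
      field_simp
      ring
    calc ‖w k‖ = ‖∑' j : ℕ, ((Nat.factorial k : ℂ) / (Nat.factorial (j + k)) * lam^(j+1)) •
          mvE ((Nmat n M (j + k + 1))ᴴ) z‖ := by rw [hw k]
      _ ≤ ∑' j : ℕ, ‖((Nat.factorial k : ℂ) / (Nat.factorial (j + k)) * lam^(j+1)) •
          mvE ((Nmat n M (j + k + 1))ᴴ) z‖ := norm_tsum_le_tsum_norm (hpart1 k)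
      _ ≤ ∑' j : ℕ, D k * (L / ρ')^j := Summable.tsum_le_tsum hle (hpart1 k) hmaj
      _ = D k * (1 - L / ρ')⁻¹ := by
          rw [tsum_mul_left, tsum_geometric_of_lt_one hq'0 hq'1]
  set E := C₁ * C₂ * ‖z‖ * L * (1 - L / ρ')⁻¹ with hEdef
  have hE0 : 0 ≤ E := by
    have : 0 ≤ (1 - L / ρ')⁻¹ := inv_nonneg.mpr h1q'.le
    have h2 : 0 ≤ C₁ * C₂ * ‖z‖ * L := by positivity
    exact mul_nonneg h2 this
  have hrr0 : 0 ≤ ρ / ρ' := by positivity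
  have hrr1 : ρ / ρ' < 1 := by rw [div_lt_one hρ'0]; exact hρ'gt
  refine Summable.of_nonneg_of_le (fun k => by positivity) (fun k => ?_)
    ((summable_geometric_of_lt_one hrr0 hrr1).mul_left (E * (ρ / ρ')))
  calc ρ^(k+1) / ((Nat.factorial (k+1)) : ℝ) * ‖w k‖
      ≤ ρ^(k+1) / ((Nat.factorial (k+1)) : ℝ) * (D k * (1 - L / ρ')⁻¹) := by
        refine mul_le_mul_of_nonneg_left (hwk k) (by positivity)
    _ = E * ((Nat.factorial k : ℝ) / (Nat.factorial (k+1))) * (ρ / ρ')^(k+1) := by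
        rw [hEdef, hDdef, div_pow]
        have hfne : ((Nat.factorial (k+1)) : ℝ) ≠ 0 := Nat.cast_ne_zero.mpr (Nat.factorial_ne_zero _)
        field_simp
    _ ≤ E * 1 * (ρ / ρ')^(k+1) := by
        refine mul_le_mul_of_nonneg_right (mul_le_mul_of_nonneg_left ?_ hE0) (by positivity)
        rw [div_le_one (by positivity)]
        exact_mod_cast Nat.factorial_le (Nat.le_succ k)
    _ = E * (ρ / ρ') * (ρ / ρ')^k := by rw [mul_one]; ring
end
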